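/- There exists a constant C > 0 such that for all t ≥ 1, all ε ∈ (0, 1], all d₀ ≥ ε, and all ψ₀ ∈ ℝ, one has ∫_{max(d₀ − ε, 0)}^{d₀ + ε} ∫_{{ψ : |ψ − ψ₀| ≤ ε/d₀}} (t² − u²)₊^{−1/2} · u dψ du ≤ C t^{−1/2}. -/

import Mathlib

open MeasureTheory Real

/-- `(x)₊^{-1/2}`: equals `x^{-1/2}` for `x > 0` and `0` for `x ≤ 0`. -/
noncomputable def negHalfPos (x : ℝ) : ℝ := if 0 < x then x ^ (-(1/2) : ℝ) else 0

lemma rpow_neg_half_of_nonpos {x : ℝ} (hx : x ≤ 0) : x ^ (-(1/2) : ℝ) = 0 := by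
  rcases lt_or_eq_of_le hx with h | h
  · rw [Real.rpow_def_of_neg h]
    have : cos (-(1/2) * π) = 0 := by
      rw [show (-(1/2) : ℝ) * π = -(π/2) by ring, Real.cos_neg, Real.cos_pi_div_two]
    rw [this, mul_zero]
  · rw [h, Real.zero_rpow (by norm_num)]

lemma negHalfPos_eq (x : ℝ) : negHalfPos x = x ^ (-(1/2) : ℝ) := by
  unfold negHalfPos
  split_ifs with h
  · rfl
  · exact (rpow_neg_half_of_nonpos (not_lt.1 h)).symm

lemma rpow_neg_half_nonneg (x : ℝ) : 0 ≤ x ^ (-(1/2) : ℝ) := by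
  rcases le_or_gt x 0 with h | h
  · rw [rpow_neg_half_of_nonpos h]
  · exact Real.rpow_nonneg h.le _

lemma sqrt_sub_sqrt_le {x y : ℝ} (hxy : x ≤ y) : Real.sqrt y - Real.sqrt x ≤ Real.sqrt (y - x) := by
  rcases le_or_gt x 0 with h | h
  · rw [Real.sqrt_eq_zero_of_nonpos h, sub_zero]
    exact Real.sqrt_le_sqrt (by linarith)
  · have h1 : Real.sqrt y ≤ Real.sqrt x + Real.sqrt (y - x) := by
      have h2 : y ≤ (Real.sqrt x + Real.sqrt (y - x))^2 := by
        have e1 : Real.sqrt x ^ 2 = x := Real.sq_sqrt h.le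
        have e2 : Real.sqrt (y - x) ^ 2 = y - x := Real.sq_sqrt (by linarith)
        nlinarith [Real.sqrt_nonneg x, Real.sqrt_nonneg (y - x)]
      calc Real.sqrt y ≤ Real.sqrt ((Real.sqrt x + Real.sqrt (y - x))^2) := Real.sqrt_le_sqrt h2
        _ = Real.sqrt x + Real.sqrt (y - x) := by
            rw [Real.sqrt_sq (by positivity)]
    linarith

/-- Annular-sector estimate from the proof of Lemma 3.2 in the case `t ≥ 1`. -/
theorem stmt_17 : ∃ C > (0:ℝ), ∀ t : ℝ, 1 ≤ t → ∀ ε : ℝ, 0 < ε → ε ≤ 1 →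
    ∀ d₀ : ℝ, ε ≤ d₀ → ∀ ψ₀ : ℝ,
    (∫ u in Set.Ioc (max (d₀ - ε) 0) (d₀ + ε),
      (∫ ψ in {ψ : ℝ | |ψ - ψ₀| ≤ ε / d₀}, negHalfPos (t^2 - u^2)) * u)
      ≤ C * t ^ (-(1/2) : ℝ) := by
  refine ⟨12, by norm_num, ?_⟩
  intro t ht ε hε hε1 d₀ hd ψ₀
  have hd0 : 0 < d₀ := lt_of_lt_of_le hε hd
  have ht0 : 0 < t := lt_of_lt_of_le one_pos ht
  set a : ℝ := max (d₀ - ε) 0 with ha_def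
  set b : ℝ := d₀ + ε with hb_def
  have ha : a = d₀ - ε := max_eq_left (by linarith)
  have hab : a ≤ b := by rw [ha]; linarith
  have hq : 0 ≤ ε / d₀ := by positivity
  -- inner integral
  have hinner : ∀ u : ℝ, (∫ ψ in {ψ : ℝ | |ψ - ψ₀| ≤ ε / d₀}, negHalfPos (t^2 - u^2))
      = (2 * (ε / d₀)) * negHalfPos (t^2 - u^2) := by
    intro u
    have hset : {ψ : ℝ | |ψ - ψ₀| ≤ ε / d₀} = Metric.closedBall ψ₀ (ε / d₀) := by
      ext ψ; simp [Metric.mem_closedBall, Real.dist_eq]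
    rw [hset, setIntegral_const, Real.volume_real_closedBall hq, smul_eq_mul]
  simp only [hinner]
  set g : ℝ → ℝ := fun u => (4 * t ^ (-(1/2) : ℝ)) * (t - u) ^ (-(1/2) : ℝ) with hg_def
  -- pointwise bound
  have key : ∀ u ∈ Set.Ioc a b, 2 * (ε / d₀) * negHalfPos (t^2 - u^2) * u ≤ g u := by
    intro u hu
    have hu0 : 0 < u := lt_of_le_of_lt (le_max_right _ _) hu.1
    have hub : u ≤ 2 * d₀ := by have := hu.2; simp only [hb_def] at this; linarith
    have hA : (t^2 - u^2) ^ (-(1/2) : ℝ) ≤ t ^ (-(1/2) : ℝ) * (t - u) ^ (-(1/2) : ℝ) := by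
      rcases lt_or_ge u t with h | h
      · have h1 : (0:ℝ) < t - u := by linarith
        have h2 : (0:ℝ) < t + u := by linarith
        have he : t^2 - u^2 = (t - u) * (t + u) := by ring
        rw [he, Real.mul_rpow h1.le h2.le]
        have h3 : (t + u) ^ (-(1/2) : ℝ) ≤ t ^ (-(1/2) : ℝ) :=
          Real.rpow_le_rpow_of_nonpos ht0 (by linarith) (by norm_num)
        calc (t - u) ^ (-(1/2) : ℝ) * (t + u) ^ (-(1/2) : ℝ)
            ≤ (t - u) ^ (-(1/2) : ℝ) * t ^ (-(1/2) : ℝ) :=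
              mul_le_mul_of_nonneg_left h3 (rpow_neg_half_nonneg _)
          _ = t ^ (-(1/2) : ℝ) * (t - u) ^ (-(1/2) : ℝ) := by ring
      · have : t^2 - u^2 ≤ 0 := by nlinarith
        rw [rpow_neg_half_of_nonpos this]
        exact mul_nonneg (rpow_neg_half_nonneg _) (rpow_neg_half_nonneg _)
    rw [negHalfPos_eq, hg_def]
    have hX : 0 ≤ (t^2 - u^2) ^ (-(1/2) : ℝ) := rpow_neg_half_nonneg _
    have hT : 0 ≤ t ^ (-(1/2) : ℝ) := rpow_neg_half_nonneg _
    have hS : 0 ≤ (t - u) ^ (-(1/2) : ℝ) := rpow_neg_half_nonneg _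
    have hqu : (ε / d₀) * u ≤ 2 := by
      rw [div_mul_eq_mul_div, div_le_iff₀ hd0]; nlinarith
    calc 2 * (ε / d₀) * (t^2 - u^2) ^ (-(1/2) : ℝ) * u
        = (2 * ((ε / d₀) * u)) * (t^2 - u^2) ^ (-(1/2) : ℝ) := by ring
      _ ≤ 4 * (t^2 - u^2) ^ (-(1/2) : ℝ) :=
          mul_le_mul_of_nonneg_right (by linarith) hX
      _ ≤ 4 * (t ^ (-(1/2) : ℝ) * (t - u) ^ (-(1/2) : ℝ)) := by linarith [hA]
      _ = (4 * t ^ (-(1/2) : ℝ)) * (t - u) ^ (-(1/2) : ℝ) := by ring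
  -- integrability of the bound
  have hint : IntervalIntegrable (fun u => (t - u) ^ (-(1/2) : ℝ)) volume a b := by
    have h0 : IntervalIntegrable (fun x : ℝ => x ^ (-(1/2) : ℝ)) volume (t - b) (t - a) :=
      intervalIntegral.intervalIntegrable_rpow' (by norm_num)
    have := (h0.comp_sub_left t).symm
    simpa using this
  have hgint : IntegrableOn g (Set.Ioc a b) := by
    have := (intervalIntegrable_iff_integrableOn_Ioc_of_le hab).1 hint
    exact this.const_mul _
  -- monotonicity
  have h1 : (∫ u in Set.Ioc a b, 2 * (ε / d₀) * negHalfPos (t^2 - u^2) * u)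
      ≤ ∫ u in Set.Ioc a b, g u := by
    refine integral_mono_of_nonneg ?_ hgint ?_
    · refine (ae_restrict_iff' measurableSet_Ioc).2 (Filter.Eventually.of_forall ?_)
      intro u hu
      have hu0 : (0:ℝ) ≤ u := le_trans (le_max_right _ _) hu.1.le
      have : 0 ≤ negHalfPos (t^2 - u^2) := by rw [negHalfPos_eq]; exact rpow_neg_half_nonneg _
      positivity
    · exact (ae_restrict_iff' measurableSet_Ioc).2 (Filter.Eventually.of_forall key)
  refine le_trans h1 ?_
  -- compute the integral of g
  have h2 : (∫ u in Set.Ioc a b, g u)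
      = (4 * t ^ (-(1/2) : ℝ)) * ∫ u in Set.Ioc a b, (t - u) ^ (-(1/2) : ℝ) :=
    integral_const_mul _ _
  have h3 : (∫ u in Set.Ioc a b, (t - u) ^ (-(1/2) : ℝ))
      = ∫ u in a..b, (t - u) ^ (-(1/2) : ℝ) := (intervalIntegral.integral_of_le hab).symm
  have h4 : (∫ u in a..b, (t - u) ^ (-(1/2) : ℝ))
      = ∫ s in (t - b)..(t - a), s ^ (-(1/2) : ℝ) :=
    intervalIntegral.integral_comp_sub_left (fun s => s ^ (-(1/2) : ℝ)) t
  have h5 : (∫ s in (t - b)..(t - a), s ^ (-(1/2) : ℝ))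
      = 2 * (Real.sqrt (t - a) - Real.sqrt (t - b)) := by
    rw [integral_rpow (Or.inl (by norm_num))]
    rw [show (-(1/2) + 1 : ℝ) = 1/2 by norm_num]
    rw [← Real.sqrt_eq_rpow, ← Real.sqrt_eq_rpow]
    ring
  have h6 : Real.sqrt (t - a) - Real.sqrt (t - b) ≤ Real.sqrt 2 := by
    have h7 := sqrt_sub_sqrt_le (x := t - b) (y := t - a) (by linarith)
    have h8 : (t - a) - (t - b) = 2 * ε := by rw [ha, hb_def]; ring
    rw [h8] at h7
    have h9 : Real.sqrt (2 * ε) ≤ Real.sqrt 2 := Real.sqrt_le_sqrt (by linarith)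
    linarith
  have hsqrt2 : Real.sqrt 2 ≤ 3/2 := by
    nlinarith [Real.sq_sqrt (by norm_num : (2:ℝ) ≥ 0), Real.sqrt_nonneg 2]
  have hT : 0 ≤ t ^ (-(1/2) : ℝ) := rpow_neg_half_nonneg _
  rw [h2, h3, h4, h5]
  calc (4 * t ^ (-(1/2) : ℝ)) * (2 * (Real.sqrt (t - a) - Real.sqrt (t - b)))
      ≤ (4 * t ^ (-(1/2) : ℝ)) * (2 * (3/2)) := by
        apply mul_le_mul_of_nonneg_left _ (by positivity)
        have := le_trans h6 hsqrt2
        linarith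
    _ = 12 * t ^ (-(1/2) : ℝ) := by ring
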